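/- arXiv:math/9804089 — 3 statements merged into one kernel-verified Lean document; each statement's English description precedes it below -/
import Mathlib

section
/- Let ũ ≥ 0 be a minimizer of J(u) = (a[u,u] + A‖u‖²_{2q})/‖u‖₂² with ‖ũ‖_{2q} = 1, 1 < q < ∞. Then ũ is a weak eigenfunction: for all w ∈ D[a] ∩ L^{2q}, a[ũ, w] + ∫ Ṽ ũ w dm = λ ∫ ũ w dm, where λ = J(ũ) and Ṽ = A ũ^{2(q-1)}. -/
open MeasureTheory Filter Topology ENNReal

/-- An abstract Dirichlet form `(a, D[a])` on `L²(X, m)`: a symmetric, non-negative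
bilinear form defined on a (dense) subspace of `L²`, satisfying the Markov property. -/
structure DirichletForm (X : Type) [MeasurableSpace X] (μ : Measure X) where
  dom : Set (X → ℝ)
  form : (X → ℝ) → (X → ℝ) → ℝ
  zero_mem : (0 : X → ℝ) ∈ dom
  dom_add : ∀ u ∈ dom, ∀ v ∈ dom, u + v ∈ dom
  dom_smul : ∀ (c : ℝ), ∀ u ∈ dom, c • u ∈ dom
  memL2 : ∀ u ∈ dom, MemLp u 2 μ
  symm : ∀ u v, form u v = form v u
  add_left : ∀ u v w, form (u + v) w = form u w + form v w
  smul_left : ∀ (c : ℝ) (u v), form (c • u) v = c * form u v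
  nonneg : ∀ u, 0 ≤ form u u
  markov : ∀ u ∈ dom, (fun x => min 1 (max (u x) 0)) ∈ dom ∧
    form (fun x => min 1 (max (u x) 0)) (fun x => min 1 (max (u x) 0)) ≤ form u u

section ELhelpers
open Metric

lemma EL_sq_rpow (y r : ℝ) (hy : 0 ≤ y) : (y^2)^r = y^(2*r) := by
  rw [← Real.rpow_natCast y 2, ← Real.rpow_mul hy]; norm_num

lemma EL_sq_rpow_abs (y r : ℝ) : (y^2)^r = |y|^(2*r) := by
  rw [← sq_abs, EL_sq_rpow _ _ (abs_nonneg y)]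

lemma EL_rpow_succ {y : ℝ} (hy : 0 ≤ y) {r : ℝ} (hr : r + 1 ≠ 0) : y^r * y = y^(r+1) := by
  rw [Real.rpow_add' hy hr, Real.rpow_one]

lemma EL_young {s b : ℝ} (hs : 0 ≤ s) (hb : 0 ≤ b) {q : ℝ} (hq : 1 < q) :
    s^(2*q-1) * b ≤ s^(2*q) + b^(2*q) := by
  rcases le_total b s with h | h
  · have h1 : s^(2*q-1) * b ≤ s^(2*q-1) * s :=
      mul_le_mul_of_nonneg_left h (Real.rpow_nonneg hs _)
    have h2 : s^(2*q-1) * s = s^(2*q) := by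
      rw [EL_rpow_succ hs (by linarith)]; ring_nf
    nlinarith [Real.rpow_nonneg hb (2*q)]
  · have h1 : s^(2*q-1) ≤ b^(2*q-1) := Real.rpow_le_rpow hs h (by linarith)
    have h2 : b^(2*q-1) * b = b^(2*q) := by
      rw [EL_rpow_succ hb (by linarith)]; ring_nf
    nlinarith [Real.rpow_nonneg hs (2*q), Real.rpow_nonneg hb (2*q-1)]

lemma EL_cont_rpow {r : ℝ} (hr : 0 ≤ r) : Continuous fun z : ℝ => z ^ r := by
  rw [continuous_iff_continuousAt]
  intro z
  exact Real.continuousAt_rpow_const z r (Or.inr hr)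

lemma EL_deriv {X : Type} [MeasurableSpace X] {μ : Measure X} {q : ℝ} (hq : 1 < q)
    {u w : X → ℝ} (hu : MemLp u (ENNReal.ofReal (2*q)) μ)
    (hw : MemLp w (ENNReal.ofReal (2*q)) μ) :
    HasDerivAt (fun t : ℝ => ∫ x, ((u x + t * w x)^2)^q ∂μ)
      (∫ x, q * ((u x)^2)^(q-1) * (2 * u x * w x) ∂μ) 0 := by
  have hq0 : (0:ℝ) < q := by linarith
  have hP0 : ENNReal.ofReal (2*q) ≠ 0 := by
    simp only [ne_eq, ENNReal.ofReal_eq_zero, not_le]; linarith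
  have hPtop : ENNReal.ofReal (2*q) ≠ ⊤ := ENNReal.ofReal_ne_top
  have hPto : (ENNReal.ofReal (2*q)).toReal = 2*q := ENNReal.toReal_ofReal (by linarith)
  -- measurability of linear combos
  have hmeas : ∀ t : ℝ, AEStronglyMeasurable (fun x => u x + t * w x) μ := fun t =>
    hu.1.add (hw.1.const_mul t)
  have hcq : Continuous fun y : ℝ => (y^2)^q :=
    (EL_cont_rpow hq0.le).comp (continuous_pow 2)
  have hcq1 : Continuous fun y : ℝ => (y^2)^(q-1) :=
    (EL_cont_rpow (by linarith : (0:ℝ) ≤ q-1)).comp (continuous_pow 2)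
  have hF_meas : ∀ᶠ t in 𝓝 (0:ℝ), AEStronglyMeasurable (fun x => ((u x + t * w x)^2)^q) μ :=
    Eventually.of_forall fun t => hcq.comp_aestronglyMeasurable (hmeas t)
  have hF_int : Integrable (fun x => ((u x + (0:ℝ) * w x)^2)^q) μ := by
    refine (hu.integrable_norm_rpow hP0 hPtop).congr (Eventually.of_forall fun x => ?_)
    simp only [hPto, Real.norm_eq_abs]
    rw [EL_sq_rpow_abs]
    norm_num
  have hF'_meas : AEStronglyMeasurable
      (fun x => q * ((u x + (0:ℝ) * w x)^2)^(q-1) * (2 * (u x + (0:ℝ) * w x) * w x)) μ := by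
    exact (((hcq1.comp_aestronglyMeasurable (hmeas 0)).const_mul q).mul
      (((hmeas 0).const_mul 2).mul hw.1))
  -- the bound
  set s : X → ℝ := fun x => |u x| + |w x| with hs_def
  have hs_nonneg : ∀ x, 0 ≤ s x := fun x => by positivity
  have h_bound : ∀ᵐ x ∂μ, ∀ t ∈ ball (0:ℝ) 1,
      ‖q * ((u x + t * w x)^2)^(q-1) * (2 * (u x + t * w x) * w x)‖ ≤
        2*q*((s x)^(2*q) + |w x|^(2*q)) := by
    refine Eventually.of_forall fun x => fun t ht => ?_
    have ht1 : |t| ≤ 1 := by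
      have := mem_ball_zero_iff.mp ht
      rw [Real.norm_eq_abs] at this; linarith
    have habs : |u x + t * w x| ≤ s x := by
      calc |u x + t * w x| ≤ |u x| + |t * w x| := abs_add_le _ _
        _ = |u x| + |t| * |w x| := by rw [abs_mul]
        _ ≤ |u x| + 1 * |w x| := by
            have := abs_nonneg (w x)
            nlinarith
        _ = s x := by rw [hs_def]; ring
    have hsq : (u x + t * w x)^2 ≤ (s x)^2 := by
      obtain ⟨h1, h2⟩ := abs_le.mp habs
      exact sq_le_sq' h1 h2
    have hB : ((u x + t * w x)^2)^(q-1) ≤ ((s x)^2)^(q-1) :=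
      Real.rpow_le_rpow (sq_nonneg _) hsq (by linarith)
    have hC : |2 * (u x + t * w x) * w x| ≤ 2 * s x * |w x| := by
      rw [abs_mul, abs_mul, abs_two]
      have := abs_nonneg (w x)
      nlinarith
    have hBnn : (0:ℝ) ≤ ((u x + t * w x)^2)^(q-1) := Real.rpow_nonneg (sq_nonneg _) _
    have step1 : ‖q * ((u x + t * w x)^2)^(q-1) * (2 * (u x + t * w x) * w x)‖ ≤
        q * ((s x)^2)^(q-1) * (2 * s x * |w x|) := by
      rw [Real.norm_eq_abs, abs_mul, abs_mul, abs_of_nonneg hq0.le, abs_of_nonneg hBnn]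
      gcongr
    refine step1.trans ?_
    have e1 : q * ((s x)^2)^(q-1) * (2 * s x * |w x|) = 2*q * ((s x)^(2*q-1) * |w x|) := by
      rw [EL_sq_rpow _ _ (hs_nonneg x)]
      have e2 : (s x)^(2*(q-1)) * s x = (s x)^(2*q-1) := by
        have := EL_rpow_succ (hs_nonneg x) (r := 2*(q-1)) (by intro h; nlinarith)
        rw [this]; try ring_nf
      calc q * (s x)^(2*(q-1)) * (2 * s x * |w x|)
          = 2*q * (((s x)^(2*(q-1)) * s x) * |w x|) := by ring
        _ = 2*q * ((s x)^(2*q-1) * |w x|) := by rw [e2]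
    rw [e1]
    have := EL_young (hs_nonneg x) (abs_nonneg (w x)) hq
    nlinarith
  have hs_mem : MemLp s (ENNReal.ofReal (2*q)) μ := hu.norm.add hw.norm
  have bound_int : Integrable (fun x => 2*q*((s x)^(2*q) + |w x|^(2*q))) μ := by
    have h1 : Integrable (fun x => (s x)^(2*q)) μ := by
      refine (hs_mem.integrable_norm_rpow hP0 hPtop).congr (Eventually.of_forall fun x => ?_)
      simp only [hPto, Real.norm_eq_abs]
      rw [abs_of_nonneg (hs_nonneg x)]
    have h2 : Integrable (fun x => |w x|^(2*q)) μ := by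
      refine (hw.integrable_norm_rpow hP0 hPtop).congr (Eventually.of_forall fun x => ?_)
      simp only [hPto, Real.norm_eq_abs]
    exact (h1.add h2).const_mul _
  have h_diff : ∀ᵐ x ∂μ, ∀ t ∈ ball (0:ℝ) 1,
      HasDerivAt (fun t => ((u x + t * w x)^2)^q)
        (q * ((u x + t * w x)^2)^(q-1) * (2 * (u x + t * w x) * w x)) t := by
    refine Eventually.of_forall fun x => fun t _ => ?_
    have h0 : HasDerivAt (fun t : ℝ => u x + t * w x) (w x) t := by
      simpa using ((hasDerivAt_id t).mul_const (w x)).const_add (u x)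
    have hsq := h0.pow 2
    have hr := hsq.rpow_const (p := q) (Or.inr hq.le)
    convert hr using 1
    · rfl
    · norm_num only [Pi.pow_apply, pow_one]; ring
  have key := hasDerivAt_integral_of_dominated_loc_of_deriv_le
    (F := fun (t : ℝ) (x : X) => ((u x + t * w x)^2)^q)
    (F' := fun (t : ℝ) (x : X) => q * ((u x + t * w x)^2)^(q-1) * (2 * (u x + t * w x) * w x))
    (x₀ := (0:ℝ)) (bound := fun x => 2*q*((s x)^(2*q) + |w x|^(2*q)))
    (ball_mem_nhds 0 one_pos) hF_meas hF_int hF'_meas h_bound bound_int h_diff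
  have := key.2
  refine this.congr_deriv ?_
  norm_num

end ELhelpers

/-- Euler–Lagrange equation: a non-negative minimizer `ũ` of `J` with `‖ũ‖_{2q} = 1`
is a weak eigenfunction of `L + Ṽ` with `Ṽ = A ũ^{2(q-1)}` and eigenvalue `λ = J(ũ)`. -/
theorem minimizer_is_weak_eigenfunction
    {X : Type} [MeasurableSpace X] (μ : Measure X) (a : DirichletForm X μ)
    (q : ℝ) (hq : 1 < q) (A : ℝ) (hA : 0 < A)
    (u : X → ℝ) (hu : u ∈ a.dom) (hupos : ∀ x, 0 ≤ u x)
    (hnorm : eLpNorm u (ENNReal.ofReal (2 * q)) μ = 1)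
    (hmin : ∀ v ∈ a.dom, eLpNorm v 2 μ ≠ 0 → MemLp v (ENNReal.ofReal (2 * q)) μ →
      (a.form u u + A * ((eLpNorm u (ENNReal.ofReal (2 * q)) μ).toReal) ^ 2) /
          (∫ x, (u x) ^ 2 ∂μ) ≤
        (a.form v v + A * ((eLpNorm v (ENNReal.ofReal (2 * q)) μ).toReal) ^ 2) /
          (∫ x, (v x) ^ 2 ∂μ)) :
    ∀ w ∈ a.dom, MemLp w (ENNReal.ofReal (2 * q)) μ →
      a.form u w + ∫ x, (A * (u x) ^ (2 * (q - 1))) * u x * w x ∂μ =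
        ((a.form u u + A * ((eLpNorm u (ENNReal.ofReal (2 * q)) μ).toReal) ^ 2) /
            (∫ x, (u x) ^ 2 ∂μ)) * ∫ x, u x * w x ∂μ := by
  intro w hw hwq
  have hq0 : (0:ℝ) < q := by linarith
  set P := ENNReal.ofReal (2*q) with hPdef
  have hP0 : P ≠ 0 := by
    simp only [hPdef, ne_eq, ENNReal.ofReal_eq_zero, not_le]; linarith
  have hPtop : P ≠ ⊤ := ENNReal.ofReal_ne_top
  have hPto : P.toReal = 2*q := ENNReal.toReal_ofReal (by linarith)
  have hu2 : MemLp u 2 μ := a.memL2 u hu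
  have hw2 : MemLp w 2 μ := a.memL2 w hw
  have huq : MemLp u P μ := ⟨hu2.1, by rw [hnorm]; exact one_lt_top⟩
  -- key identity for eLpNorm
  have hkey : ∀ f : X → ℝ, MemLp f P μ →
      ((eLpNorm f P μ).toReal)^2 = (∫ x, ((f x)^2)^q ∂μ) ^ (q⁻¹) := by
    intro f hf
    have hTnn : 0 ≤ ∫ x, ‖f x‖ ^ P.toReal ∂μ := integral_nonneg fun x => by positivity
    have hcong : ∫ x, ‖f x‖ ^ P.toReal ∂μ = ∫ x, ((f x)^2)^q ∂μ := by
      refine integral_congr_ae (Eventually.of_forall fun x => ?_)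
      simp only [hPto, Real.norm_eq_abs]
      rw [← EL_sq_rpow_abs]
    have hSnn : 0 ≤ ∫ x, ((f x)^2)^q ∂μ := hcong ▸ hTnn
    rw [hf.eLpNorm_eq_integral_rpow_norm hP0 hPtop,
      ENNReal.toReal_ofReal (Real.rpow_nonneg hTnn _), hcong,
      ← Real.rpow_natCast ((∫ x, ((f x)^2)^q ∂μ) ^ P.toReal⁻¹) 2,
      ← Real.rpow_mul hSnn]
    congr 1
    rw [hPto]
    push_cast
    field_simp
  -- integrability
  have Iu2 : Integrable (fun x => u x ^ 2) μ := hu2.integrable_sq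
  have Iw2 : Integrable (fun x => w x ^ 2) μ := hw2.integrable_sq
  have Iuw : Integrable (fun x => u x * w x) μ := by
    refine (Iu2.add Iw2).mono' (hu2.1.mul hw2.1) (Eventually.of_forall fun x => ?_)
    simp only [Real.norm_eq_abs, abs_mul, Pi.add_apply]
    nlinarith [sq_nonneg (|u x| - |w x|), abs_nonneg (u x), abs_nonneg (w x),
      sq_abs (u x), sq_abs (w x)]
  -- positivity of the denominator
  have hb0nn : 0 ≤ ∫ x, u x ^ 2 ∂μ := integral_nonneg fun x => sq_nonneg _
  have hb0pos : 0 < ∫ x, u x ^ 2 ∂μ := by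
    rcases hb0nn.lt_or_eq with h | h
    · exact h
    · exfalso
      have h0 : (fun x => u x ^ 2) =ᵐ[μ] 0 :=
        (integral_eq_zero_iff_of_nonneg (fun x => sq_nonneg _) Iu2).mp h.symm
      have hu0 : u =ᵐ[μ] 0 := h0.mono fun x hx => by
        simpa [pow_eq_zero_iff] using hx
      have hz : eLpNorm u P μ = 0 := by rw [eLpNorm_congr_ae hu0]; simp
      rw [hnorm] at hz; exact one_ne_zero hz
  set c0 := a.form u u with hc0
  set c1 := a.form u w with hc1
  set c2 := a.form w w with hc2
  set b0 := ∫ x, u x ^ 2 ∂μ with hb0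
  set b1 := ∫ x, u x * w x ∂μ with hb1
  set b2 := ∫ x, w x ^ 2 ∂μ with hb2
  have hb0ne : b0 ≠ 0 := ne_of_gt hb0pos
  -- bilinear expansion
  have hform : ∀ t : ℝ, a.form (u + t • w) (u + t • w) = c0 + 2*c1*t + c2*t^2 := by
    intro t
    have h1 : ∀ f : X → ℝ, a.form (u + t • w) f = a.form u f + t * a.form w f := fun f => by
      rw [a.add_left, a.smul_left]
    rw [h1, a.symm u (u + t • w), a.symm w (u + t • w), h1, h1, a.symm w u]
    ring
  -- quadratic expansion of the L² norm
  have hDt : ∀ t : ℝ, ∫ x, ((u + t • w) x)^2 ∂μ = b0 + 2*b1*t + b2*t^2 := by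
    intro t
    have he : (fun x => ((u + t • w) x)^2) =
        fun x => u x ^ 2 + (2*t) * (u x * w x) + t^2 * w x ^ 2 := by
      funext x
      simp only [Pi.add_apply, Pi.smul_apply, smul_eq_mul]
      ring
    have I2 : Integrable (fun x => (2*t) * (u x * w x)) μ := Iuw.const_mul _
    have I1 : Integrable (fun x => u x ^ 2 + (2*t) * (u x * w x)) μ := Iu2.add I2
    have I3 : Integrable (fun x => t^2 * w x ^ 2) μ := Iw2.const_mul _
    rw [he, integral_add I1 I3, integral_add Iu2 I2, integral_const_mul, integral_const_mul]
    ring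
  -- H and its derivative
  set H : ℝ → ℝ := fun t => ∫ x, ((u x + t * w x)^2)^q ∂μ with hHdef
  have hHnn : ∀ t, 0 ≤ H t := fun t =>
    integral_nonneg fun x => Real.rpow_nonneg (sq_nonneg _) _
  have hHt : ∀ t : ℝ, ((eLpNorm (u + t • w) P μ).toReal)^2 = (H t) ^ (q⁻¹) := by
    intro t
    have he : ∫ x, (((u + t • w) x)^2)^q ∂μ = H t :=
      integral_congr_ae (Eventually.of_forall fun x => by
        simp [Pi.add_apply, Pi.smul_apply, smul_eq_mul])
    rw [hkey _ (huq.add (hwq.const_smul t)), he]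
  have hH0 : H 0 = 1 := by
    have h1 : (1:ℝ) = (H 0) ^ (q⁻¹) := by
      have h2 := hHt 0
      rw [show u + (0:ℝ) • w = u by simp, hnorm] at h2
      simpa using h2
    have h3 : H 0 = ((H 0) ^ (q⁻¹)) ^ q := by
      rw [← Real.rpow_mul (hHnn 0), inv_mul_cancel₀ (ne_of_gt hq0), Real.rpow_one]
    rw [h3, ← h1, Real.one_rpow]
  set I0 := ∫ x, u x ^ (2*(q-1)) * u x * w x ∂μ with hI0def
  have hint_eq : (∫ x, q * ((u x)^2)^(q-1) * (2 * u x * w x) ∂μ) = 2*q*I0 := by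
    have he : (fun x => q * ((u x)^2)^(q-1) * (2 * u x * w x)) =
        fun x => (2*q) * (u x ^ (2*(q-1)) * u x * w x) := by
      funext x
      rw [EL_sq_rpow _ _ (hupos x)]
      ring
    rw [he, integral_const_mul, hI0def]
  have hHd : HasDerivAt H (2*q*I0) 0 := hint_eq ▸ EL_deriv hq huq hwq
  set N : ℝ → ℝ := fun t => c0 + 2*c1*t + c2*t^2 + A * (H t) ^ (q⁻¹) with hNdef
  set D : ℝ → ℝ := fun t => b0 + 2*b1*t + b2*t^2 with hDdef
  have hD0 : D 0 = b0 := by simp [hDdef]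
  have hN0 : N 0 = c0 + A := by simp [hNdef, hH0, Real.one_rpow]
  have hD0ne : D 0 ≠ 0 := by rw [hD0]; exact hb0ne
  have hDc : Continuous D := by
    rw [hDdef]
    fun_prop
  have hidd : HasDerivAt (fun t : ℝ => t) 1 (0:ℝ) := hasDerivAt_id 0
  have hpolyN : HasDerivAt (fun t : ℝ => c0 + 2*c1*t + c2*t^2) (2*c1) 0 := by
    have h := ((hidd.const_mul (2*c1)).const_add c0).add ((hidd.pow 2).const_mul c2)
    refine h.congr_deriv ?_
    norm_num
  have hNd : HasDerivAt N (2*c1 + 2*A*I0) 0 := by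
    have hr := hHd.rpow_const (p := q⁻¹) (Or.inl (by rw [hH0]; exact one_ne_zero))
    have h := hpolyN.add (hr.const_mul A)
    refine h.congr_deriv ?_
    rw [hH0, Real.one_rpow]
    field_simp
  have hDd : HasDerivAt D (2*b1) 0 := by
    have h := ((hidd.const_mul (2*b1)).const_add b0).add ((hidd.pow 2).const_mul b2)
    refine h.congr_deriv ?_
    norm_num
  have hGd : HasDerivAt (fun t => N t / D t)
      (((2*c1 + 2*A*I0) * D 0 - N 0 * (2*b1)) / (D 0)^2) 0 := hNd.div hDd hD0ne
  -- local minimality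
  have hev : ∀ᶠ t in 𝓝 (0:ℝ), 0 < D t :=
    (hDc.tendsto 0).eventually (eventually_gt_nhds (by rw [hD0]; exact hb0pos))
  have hLu : (eLpNorm u P μ).toReal = 1 := by rw [hnorm]; simp
  have hlocal : IsLocalMin (fun t => N t / D t) 0 := by
    refine hev.mono fun t ht => ?_
    have hvdom : u + t • w ∈ a.dom := a.dom_add u hu (t • w) (a.dom_smul t w hw)
    have hvq : MemLp (u + t • w) P μ := huq.add (hwq.const_smul t)
    have hvne : eLpNorm (u + t • w) 2 μ ≠ 0 := by
      intro h0
      have hv0 : (u + t • w) =ᵐ[μ] 0 :=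
        (eLpNorm_eq_zero_iff hvq.1 (by norm_num)).mp h0
      have hzero : ∫ x, ((u + t • w) x)^2 ∂μ = 0 := by
        have he : (fun x => ((u + t • w) x)^2) =ᵐ[μ] (fun _ => (0:ℝ)) :=
          hv0.mono fun x hx => by simp [hx]
        rw [integral_congr_ae he, integral_zero]
      rw [hDt t] at hzero
      have ht' : 0 < b0 + 2*b1*t + b2*t^2 := ht
      linarith
    have hm := hmin (u + t • w) hvdom hvne hvq
    have hL : (c0 + A * ((eLpNorm u P μ).toReal)^2) / b0 = N 0 / D 0 := by
      rw [hLu, one_pow, mul_one, hN0, hD0]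
    have hR : (a.form (u + t • w) (u + t • w) +
        A * ((eLpNorm (u + t • w) P μ).toReal)^2) / (∫ x, ((u + t • w) x)^2 ∂μ)
          = N t / D t := by
      rw [hform t, hHt t, hDt t]
    calc (fun t => N t / D t) 0 = N 0 / D 0 := rfl
      _ = (c0 + A * ((eLpNorm u P μ).toReal)^2) / b0 := hL.symm
      _ ≤ _ := hm
      _ = N t / D t := hR
  have hz := hlocal.hasDerivAt_eq_zero hGd
  rw [hD0, hN0] at hz
  have hnum : (2*c1 + 2*A*I0) * b0 - (c0 + A) * (2*b1) = 0 := by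
    rcases div_eq_zero_iff.mp hz with h | h
    · exact h
    · exact absurd h (pow_ne_zero 2 hb0ne)
  -- conclude
  have hgoalint : (∫ x, (A * (u x) ^ (2*(q-1))) * u x * w x ∂μ) = A * I0 := by
    have he : (fun x => (A * (u x) ^ (2*(q-1))) * u x * w x) =
        fun x => A * (u x ^ (2*(q-1)) * u x * w x) := by
      funext x; ring
    rw [he, integral_const_mul, hI0def]
  rw [hgoalint, hLu, one_pow, mul_one, div_mul_eq_mul_div, eq_div_iff hb0ne]
  linear_combination hnum / 2
end

section
/- Let (ũ, Ṽ) be the extremal pair of Theorem (case 1 < p < ∞), i.e. ũ ≥ 0 minimizes J with L ũ + Ṽ ũ = λ₁(Ṽ) ũ and Ṽ = A‖ũ²‖_q^{1-q} ũ^{2(q-1)}. Then ‖ũ‖_∞ ≤ (λ₁(Ṽ)/A)^{(p-1)/2} ‖ũ‖_{2q} < ∞ and ‖Ṽ‖_∞ ≤ λ₁(Ṽ). -/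
open MeasureTheory Filter Topology ENNReal

variable {X : Type} [MeasurableSpace X] {μ : Measure X}


lemma DirichletForm.add_right (a : DirichletForm X μ) (u v w : X → ℝ) :
    a.form u (v + w) = a.form u v + a.form u w := by
  rw [a.symm, a.add_left, a.symm v u, a.symm w u]

lemma DirichletForm.smul_right (a : DirichletForm X μ) (c : ℝ) (u v : X → ℝ) :
    a.form u (c • v) = c * a.form u v := by
  rw [a.symm, a.smul_left, a.symm v u]

lemma DirichletForm.expand (a : DirichletForm X μ) (g ξ : X → ℝ) (s : ℝ) :
    a.form (g + s • ξ) (g + s • ξ)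
      = a.form g g + 2 * s * a.form g ξ + s ^ 2 * a.form ξ ξ := by
  simp only [a.add_left, a.add_right, a.smul_left, a.smul_right, a.symm ξ g]
  ring

/-- `L^∞` bounds for the extremal pair, case `1 < p < ∞`:
`‖ũ‖_∞ ≤ (λ₁(Ṽ)/A)^{(p-1)/2} ‖ũ‖_{2q}` and `‖Ṽ‖_∞ ≤ λ₁(Ṽ)`. -/
theorem extremal_pair_linfty_bounds
    {X : Type} [MeasurableSpace X] (μ : Measure X) (a : DirichletForm X μ)
    (p q : ℝ) (hpq : Real.HolderConjugate p q) (A : ℝ) (hA : 0 < A)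
    (u : X → ℝ) (hu : u ∈ a.dom) (hupos : ∀ x, 0 ≤ u x)
    (huLq : MemLp u (ENNReal.ofReal (2 * q)) μ)
    (hune : eLpNorm u 2 μ ≠ 0)
    -- `ũ` minimizes `J`
    (hmin : ∀ v ∈ a.dom, eLpNorm v 2 μ ≠ 0 → MemLp v (ENNReal.ofReal (2 * q)) μ →
      (a.form u u + A * ((eLpNorm u (ENNReal.ofReal (2 * q)) μ).toReal) ^ 2) /
          (∫ x, (u x) ^ 2 ∂μ) ≤
        (a.form v v + A * ((eLpNorm v (ENNReal.ofReal (2 * q)) μ).toReal) ^ 2) /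
          (∫ x, (v x) ^ 2 ∂μ))
    (lam : ℝ)
    (hlam : lam = (a.form u u +
      A * ((eLpNorm u (ENNReal.ofReal (2 * q)) μ).toReal) ^ 2) / (∫ x, (u x) ^ 2 ∂μ))
    -- the extremal potential `Ṽ = A ‖ũ²‖_q^{1-q} ũ^{2(q-1)}` and the eigen-equation
    (V : X → ℝ)
    (hVdef : V = fun x =>
      A * (((eLpNorm u (ENNReal.ofReal (2 * q)) μ).toReal) ^ 2) ^ (1 - q) *
        (u x) ^ (2 * (q - 1)))
    (heig : ∀ w ∈ a.dom,
      a.form u w + ∫ x, V x * u x * w x ∂μ = lam * ∫ x, u x * w x ∂μ) :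
    eLpNorm u ⊤ μ ≤
        ENNReal.ofReal ((lam / A) ^ ((p - 1) / 2) *
          (eLpNorm u (ENNReal.ofReal (2 * q)) μ).toReal) ∧
      eLpNorm V ⊤ μ ≤ ENNReal.ofReal lam := by
  clear hmin
  have hp1 : 1 < p := hpq.lt
  have hq1 : 1 < q := hpq.symm.lt
  have hpq1 : (p - 1) * (q - 1) = 1 := by
    have h := hpq.inv_add_inv_eq_one
    have hp0 : p ≠ 0 := hpq.ne_zero
    have hq0 : q ≠ 0 := hpq.symm.ne_zero
    field_simp at h
    nlinarith [h]
  have h2q0 : (0:ℝ) < 2 * q := by linarith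
  have he0 : (0:ℝ) < 2 * (q - 1) := by linarith
  set N := (eLpNorm u (ENNReal.ofReal (2 * q)) μ).toReal with hNdef
  have huL2 : MemLp u 2 μ := a.memL2 u hu
  have hum : AEStronglyMeasurable u μ := huL2.aestronglyMeasurable
  have hNpos : 0 < N := by
    refine ENNReal.toReal_pos ?_ huLq.eLpNorm_ne_top
    intro h0
    rw [eLpNorm_eq_zero_iff hum (ENNReal.ofReal_pos.2 h2q0).ne'] at h0
    exact hune ((eLpNorm_eq_zero_iff hum (by norm_num)).2 h0)
  have hsqint : Integrable (fun x => u x ^ 2) μ := huL2.integrable_sq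
  have hI2 : 0 < ∫ x, u x ^ 2 ∂μ := by
    rcases lt_or_eq_of_le (integral_nonneg (f := fun x => u x ^ 2) fun x => sq_nonneg (u x)) with h | h
    · exact h
    · exfalso
      have h0 := (integral_eq_zero_iff_of_nonneg (fun x => sq_nonneg (u x)) hsqint).1 h.symm
      apply hune
      rw [eLpNorm_eq_zero_iff hum (by norm_num)]
      filter_upwards [h0] with x hx
      have hx' : u x ^ 2 = 0 := hx
      have := pow_eq_zero_iff (n := 2) (by norm_num) |>.1 hx'
      simpa using this
  have hlam0 : 0 < lam := by
    rw [hlam]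
    refine div_pos ?_ hI2
    have h1 := a.nonneg u
    have h2 : 0 < A * N ^ 2 := by positivity
    linarith
  set c := (lam / A) ^ ((p - 1) / 2) * N with hcdef
  have hcpos : 0 < c := mul_pos (Real.rpow_pos_of_pos (div_pos hlam0 hA) _) hNpos
  -- the truncation g = min c u and the excess ξ = u - g
  obtain ⟨hTmem, -⟩ := a.markov _ (a.dom_smul c⁻¹ u hu)
  set g : X → ℝ := fun x => min c (u x) with hgdef
  have hgx : ∀ x, g x = min c (u x) := fun _ => rfl
  have hgmem : g ∈ a.dom := by
    have h1 := a.dom_smul c _ hTmem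
    have h2 : (c • fun x => min 1 (max ((c⁻¹ • u) x) 0)) = g := by
      funext x
      simp only [hgdef, Pi.smul_apply, smul_eq_mul]
      rw [max_eq_left (mul_nonneg (inv_nonneg.2 hcpos.le) (hupos x)),
        mul_min_of_nonneg _ _ hcpos.le, mul_one, ← mul_assoc,
        mul_inv_cancel₀ hcpos.ne', one_mul]
    rwa [h2] at h1
  set ξ : X → ℝ := u + (-1 : ℝ) • g with hξdef
  have hξmem : ξ ∈ a.dom := a.dom_add u hu _ (a.dom_smul (-1) g hgmem)
  have hξx : ∀ x, ξ x = u x - min c (u x) := by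
    intro x
    simp only [hξdef, Pi.add_apply, Pi.smul_apply, smul_eq_mul, hgx x]
    ring
  have hξnn : ∀ x, 0 ≤ ξ x := fun x => by
    rw [hξx]; exact sub_nonneg.2 (min_le_right _ _)
  have hξle : ∀ x, ξ x ≤ u x := fun x => by
    rw [hξx]
    have : 0 ≤ min c (u x) := le_min hcpos.le (hupos x)
    linarith
  have huge : u = g + ξ := by
    funext x
    simp only [hξdef, Pi.add_apply, Pi.smul_apply, smul_eq_mul]
    ring
  -- Markov trick : 0 ≤ a[g, ξ]
  have hkey : ∀ s : ℝ, 0 < s → 0 ≤ 2 * s * a.form g ξ + s ^ 2 * a.form ξ ξ := by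
    intro s hs
    obtain ⟨-, hle⟩ := a.markov _
      (a.dom_smul c⁻¹ _ (a.dom_add g hgmem _ (a.dom_smul s ξ hξmem)))
    have hTw : (fun x => min 1 (max ((c⁻¹ • (g + s • ξ)) x) 0)) = c⁻¹ • g := by
      funext x
      simp only [Pi.smul_apply, Pi.add_apply, smul_eq_mul]
      rcases le_or_gt (u x) c with h | h
      · have hx0 : ξ x = 0 := by rw [hξx, min_eq_right h]; ring
        have hgc : g x = u x := by rw [hgx, min_eq_right h]
        rw [hx0, hgc, mul_zero, add_zero,
          max_eq_left (mul_nonneg (inv_nonneg.2 hcpos.le) (hupos x)),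
          min_eq_right]
        rw [← inv_mul_cancel₀ hcpos.ne']
        exact mul_le_mul_of_nonneg_left h (inv_nonneg.2 hcpos.le)
      · have hgc : g x = c := by rw [hgx, min_eq_left h.le]
        have hx0 : 0 < ξ x := by rw [hξx, min_eq_left h.le]; linarith
        have h1 : c⁻¹ * c = 1 := inv_mul_cancel₀ hcpos.ne'
        have h2 : 1 ≤ c⁻¹ * (c + s * ξ x) := by
          rw [mul_add, h1]
          have : 0 ≤ c⁻¹ * (s * ξ x) := by positivity
          linarith
        rw [hgc, max_eq_left (by linarith), min_eq_left h2, h1]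
    rw [hTw] at hle
    rw [a.smul_left, a.smul_right, a.smul_left, a.smul_right, a.expand] at hle
    have hc2 : (0:ℝ) < c⁻¹ * c⁻¹ := by positivity
    nlinarith [hle, mul_pos hcpos hcpos]
  have hG : 0 ≤ a.form g ξ := by
    by_contra hneg
    push_neg at hneg
    have hB : 0 ≤ a.form ξ ξ := a.nonneg ξ
    set B := a.form ξ ξ with hBdef
    set G := a.form g ξ with hGdef
    have hsd : 0 < -G / (B + 1) := div_pos (by linarith) (by linarith)
    set s := min 1 (-G / (B + 1)) with hsdef
    have hsp : 0 < s := lt_min one_pos hsd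
    have hs2 : s * (B + 1) ≤ -G := by
      rw [← le_div_iff₀ (by linarith : (0:ℝ) < B + 1)]
      exact min_le_right _ _
    have h := hkey s hsp
    nlinarith [mul_le_mul_of_nonneg_left hs2 hsp.le, mul_pos hsp hsp,
      mul_pos hsp (neg_pos.2 hneg)]
  have hformnn : 0 ≤ a.form u ξ := by
    have : a.form u ξ = a.form g ξ + a.form ξ ξ := by
      conv_lhs => rw [huge]
      rw [a.add_left]
    rw [this]
    exact add_nonneg hG (a.nonneg ξ)
  -- integrability
  have hξm : AEStronglyMeasurable ξ μ := (a.memL2 ξ hξmem).aestronglyMeasurable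
  have huξ_int : Integrable (fun x => u x * ξ x) μ := by
    refine hsqint.mono' (hum.mul hξm) (ae_of_all _ fun x => ?_)
    rw [Real.norm_eq_abs, abs_of_nonneg (mul_nonneg (hupos x) (hξnn x))]
    nlinarith [hξle x, hupos x, hξnn x]
  have hKpos : (0:ℝ) < A * (N ^ 2) ^ (1 - q) :=
    mul_pos hA (Real.rpow_pos_of_pos (by positivity) _)
  have hVm : AEStronglyMeasurable V μ := by
    rw [hVdef]
    exact ((Real.continuous_rpow_const he0.le).comp_aestronglyMeasurable hum).const_mul _
  have hVnn : ∀ x, 0 ≤ V x := by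
    intro x
    rw [hVdef]
    exact mul_nonneg hKpos.le (Real.rpow_nonneg (hupos x) _)
  have hu2q_int : Integrable (fun x => ‖u x‖ ^ (2 * q)) μ := by
    have h := huLq.integrable_norm_rpow (ENNReal.ofReal_pos.2 h2q0).ne' ENNReal.ofReal_ne_top
    rwa [ENNReal.toReal_ofReal h2q0.le] at h
  have hrpow_id : ∀ x, (u x) ^ (2 * (q - 1)) * u x * u x = (u x) ^ (2 * q) := by
    intro x
    rcases eq_or_lt_of_le (hupos x) with h | h
    · rw [← h, Real.zero_rpow he0.ne', Real.zero_rpow h2q0.ne', zero_mul, zero_mul]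
    · have h1 : u x * u x = u x ^ ((2:ℕ):ℝ) := by
        rw [Real.rpow_natCast]; ring
      rw [mul_assoc, h1, ← Real.rpow_add h]
      norm_num
      congr 1
      ring
  have hVuξ_int : Integrable (fun x => V x * u x * ξ x) μ := by
    refine (hu2q_int.const_mul (A * (N ^ 2) ^ (1 - q))).mono'
      ((hVm.mul hum).mul hξm) (ae_of_all _ fun x => ?_)
    rw [Real.norm_eq_abs,
      abs_of_nonneg (mul_nonneg (mul_nonneg (hVnn x) (hupos x)) (hξnn x)),
      Real.norm_eq_abs, abs_of_nonneg (hupos x)]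
    simp only [hVdef]
    rw [← hrpow_id x]
    have e1 : (0:ℝ) ≤ u x ^ (2 * (q - 1)) := Real.rpow_nonneg (hupos x) _
    have h3 := mul_le_mul_of_nonneg_left (hξle x)
      (mul_nonneg (mul_nonneg hKpos.le e1) (hupos x))
    nlinarith [h3]
  have he := heig ξ hξmem
  have hIeq : ∫ x, (lam * (u x * ξ x) - V x * u x * ξ x) ∂μ
      = lam * (∫ x, u x * ξ x ∂μ) - ∫ x, V x * u x * ξ x ∂μ := by
    rw [integral_sub (huξ_int.const_mul lam) hVuξ_int, integral_const_mul]
  have h0le : 0 ≤ ∫ x, (lam * (u x * ξ x) - V x * u x * ξ x) ∂μ := by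
    rw [hIeq]; linarith [he, hformnn]
  have hclam : A * (N ^ 2) ^ (1 - q) * c ^ (2 * (q - 1)) = lam := by
    rw [hcdef,
      Real.mul_rpow (Real.rpow_nonneg (div_pos hlam0 hA).le _) hNpos.le,
      ← Real.rpow_mul (div_pos hlam0 hA).le,
      show (p - 1) / 2 * (2 * (q - 1)) = 1 by linear_combination hpq1,
      Real.rpow_one, ← Real.rpow_natCast N 2, ← Real.rpow_mul hNpos.le]
    have hNN : N ^ (((2:ℕ):ℝ) * (1 - q)) * N ^ (2 * (q - 1)) = 1 := by
      rw [← Real.rpow_add hNpos,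
        show ((2:ℕ):ℝ) * (1 - q) + 2 * (q - 1) = 0 by push_cast; ring,
        Real.rpow_zero]
    rw [show A * N ^ (((2:ℕ):ℝ) * (1 - q)) * (lam / A * N ^ (2 * (q - 1)))
        = (A / A) * lam * (N ^ (((2:ℕ):ℝ) * (1 - q)) * N ^ (2 * (q - 1))) by ring,
      div_self hA.ne', hNN, one_mul, mul_one]
  have hptws : ∀ x, lam * (u x * ξ x) - V x * u x * ξ x ≤ 0 ∧
      (lam * (u x * ξ x) - V x * u x * ξ x = 0 → u x ≤ c) := by
    intro x
    rcases le_or_gt (u x) c with h | h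
    · have hx0 : ξ x = 0 := by rw [hξx, min_eq_right h]; ring
      rw [hx0]
      refine ⟨by simp, fun _ => h⟩
    · have hupx : 0 < u x := lt_trans hcpos h
      have hξpos : 0 < ξ x := by rw [hξx, min_eq_left h.le]; linarith
      have hVgt : lam < V x := by
        simp only [hVdef]
        rw [← hclam]
        exact mul_lt_mul_of_pos_left (Real.rpow_lt_rpow hcpos.le h he0) hKpos
      have hlt : lam * (u x * ξ x) - V x * u x * ξ x < 0 := by
        nlinarith [mul_pos (sub_pos.2 hVgt) (mul_pos hupx hξpos)]
      exact ⟨hlt.le, fun hh => absurd hh hlt.ne⟩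
  have hint0 : ∫ x, (lam * (u x * ξ x) - V x * u x * ξ x) ∂μ = 0 :=
    le_antisymm (integral_nonpos (f := fun x => lam * (u x * ξ x) - V x * u x * ξ x) fun x => (hptws x).1) h0le
  have hfint : Integrable (fun x => lam * (u x * ξ x) - V x * u x * ξ x) μ :=
    (huξ_int.const_mul lam).sub hVuξ_int
  have haec : ∀ᵐ x ∂μ, u x ≤ c := by
    have h1 : ∫ x, -(lam * (u x * ξ x) - V x * u x * ξ x) ∂μ = 0 := by
      rw [integral_neg, hint0, neg_zero]
    have h2 := (integral_eq_zero_iff_of_nonneg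
      (fun x => neg_nonneg.2 (hptws x).1) hfint.neg).1 h1
    filter_upwards [h2] with x hx
    have hx' : -(lam * (u x * ξ x) - V x * u x * ξ x) = 0 := hx
    exact (hptws x).2 (by linarith)
  constructor
  · rw [eLpNorm_exponent_top]
    refine eLpNormEssSup_le_of_ae_bound (C := c) ?_
    filter_upwards [haec] with x hx
    rw [Real.norm_eq_abs, abs_of_nonneg (hupos x)]
    exact hx
  · rw [eLpNorm_exponent_top]
    refine eLpNormEssSup_le_of_ae_bound (C := lam) ?_
    filter_upwards [haec] with x hx
    rw [Real.norm_eq_abs, abs_of_nonneg (hVnn x)]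
    calc V x = A * (N ^ 2) ^ (1 - q) * u x ^ (2 * (q - 1)) := by simp only [hVdef]
      _ ≤ A * (N ^ 2) ^ (1 - q) * c ^ (2 * (q - 1)) :=
          mul_le_mul_of_nonneg_left (Real.rpow_le_rpow (hupos x) hx he0.le) hKpos.le
      _ = lam := hclam
end

section
/- Let (a, D[a]) be a strongly local Dirichlet form (satisfying compact embedding, Urysohn property, and continuous core) and suppose, in the setting of the p = 1 problem, ũ is a non-negative minimizer of J with ‖ũ‖_∞ = 1, λ = J(ũ), and ũ satisfies a[ũ, v] + λ∫_I ũ v dm = λ∫ ũ v dm for all v ∈ D[a], where I = {ũ = 1}. Then m(I) > 0 and A = λ m(I). -/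
open MeasureTheory Filter Topology ENNReal

/-- Case `p = 1`: for the minimizer `ũ` of `J` with `‖ũ‖_∞ = 1` satisfying
`a[ũ,v] + λ∫_I ũ v = λ∫ ũ v` for all `v ∈ D[a]` with `I = {ũ = 1}`, the contact set
has positive measure and `A = λ m(I)`. -/
theorem contact_set_positive_measure
    {X : Type} [MeasurableSpace X] (μ : Measure X) (a : DirichletForm X μ)
    (A : ℝ) (hA : 0 < A)
    (u : X → ℝ) (hu : u ∈ a.dom) (hupos : ∀ x, 0 ≤ u x)
    (huinf : eLpNorm u ⊤ μ = 1) (hune : eLpNorm u 2 μ ≠ 0)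
    (hmin : ∀ v ∈ a.dom, eLpNorm v 2 μ ≠ 0 → MemLp v ⊤ μ →
      (a.form u u + A * ((eLpNorm u ⊤ μ).toReal) ^ 2) / (∫ x, (u x) ^ 2 ∂μ) ≤
        (a.form v v + A * ((eLpNorm v ⊤ μ).toReal) ^ 2) / (∫ x, (v x) ^ 2 ∂μ))
    (lam : ℝ)
    (hlam : lam = (a.form u u + A * ((eLpNorm u ⊤ μ).toReal) ^ 2) /
      (∫ x, (u x) ^ 2 ∂μ))
    (heq : ∀ v ∈ a.dom,
      a.form u v + lam * ∫ x in {x | u x = 1}, u x * v x ∂μ =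
        lam * ∫ x, u x * v x ∂μ) :
    0 < μ {x | u x = 1} ∧ μ {x | u x = 1} ≠ ⊤ ∧
      A = lam * (μ {x | u x = 1}).toReal := by
  have huL2 := a.memL2 u hu
  have hmeas : AEStronglyMeasurable u μ := huL2.aestronglyMeasurable
  set I := {x | u x = 1} with hIdef
  -- I is null measurable
  have hI : NullMeasurableSet I μ := by
    obtain ⟨g, hg, hug⟩ := hmeas
    have hgm : MeasurableSet {x | g x = 1} :=
      hg.measurable (measurableSet_singleton (1 : ℝ))
    refine hgm.nullMeasurableSet.congr ?_
    filter_upwards [hug] with x hx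
    show (g x = 1) = (u x = 1)
    rw [hx]
  -- I has finite measure
  have hfin : μ I < ⊤ := by
    have hsub : I ⊆ {x | (1 : NNReal) ≤ ‖u x‖₊} := by
      intro x hx
      simp only [Set.mem_setOf_eq] at hx ⊢
      rw [hx]; simp
    exact (measure_mono hsub).trans_lt
      (huL2.meas_ge_lt_top two_ne_zero ENNReal.ofNat_ne_top one_ne_zero)
  -- ∫ u² > 0
  have hint : Integrable (fun x => u x ^ 2) μ := huL2.integrable_sq
  have hnn : 0 ≤ ∫ x, u x ^ 2 ∂μ := integral_nonneg fun x => sq_nonneg _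
  have hpos : 0 < ∫ x, u x ^ 2 ∂μ := by
    rcases hnn.lt_or_eq with h | h
    · exact h
    · exfalso
      have h0 : (fun x => u x ^ 2) =ᵐ[μ] 0 :=
        (integral_eq_zero_iff_of_nonneg (fun x => sq_nonneg _) hint).mp h.symm
      have hu0 : u =ᵐ[μ] 0 := by
        filter_upwards [h0] with x hx
        simpa [pow_eq_zero_iff] using hx
      exact hune (by rw [eLpNorm_congr_ae hu0, eLpNorm_zero])
  -- the set integral equals the measure
  have hset : ∫ x in I, u x * u x ∂μ = (μ I).toReal := by
    have hae : ∀ᵐ x ∂(μ.restrict I), u x * u x = 1 := by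
      filter_upwards [ae_restrict_mem₀ hI] with x hx
      have hx' : u x = 1 := hx
      rw [hx']; ring
    rw [integral_congr_ae hae, integral_const, smul_eq_mul, mul_one,
      measureReal_restrict_apply_univ]; rfl
  have hsq : ∫ x, u x * u x ∂μ = ∫ x, u x ^ 2 ∂μ := by
    congr 1; ext x; ring
  have htop : ((eLpNorm u ⊤ μ).toReal) = 1 := by rw [huinf]; simp
  have key := heq u hu
  rw [hset, hsq] at key
  have hlams : lam * ∫ x, u x ^ 2 ∂μ = a.form u u + A := by
    rw [hlam, htop, one_pow, mul_one, div_mul_cancel₀ _ hpos.ne']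
  have hAeq : A = lam * (μ I).toReal := by linarith [key, hlams]
  have hne : μ I ≠ 0 := by
    intro h0
    rw [h0] at hAeq
    simp at hAeq
    exact hA.ne' hAeq
  exact ⟨pos_iff_ne_zero.mpr hne, hfin.ne, hAeq⟩
end
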